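/- Let Y be a real random variable with mean E[Y] = X and variance Var[Y] = a + bX + cX², where a, b, c are real constants with c ≠ −1 and Y has a finite second moment. Then the statistic (a + bY + cY²)/(1 + c) is an unbiased estimator of the variance: E[(a + bY + cY²)/(1 + c)] = Var[Y]. -/

import Mathlib

open MeasureTheory ProbabilityTheory

/-- **Unbiased variance estimator for quadratic variance functions (QVFs).**
If `Y` is square-integrable with mean `X` and variance `a + bX + cX²` where `c ≠ -1`, then
`(a + bY + cY²)/(1 + c)` is an unbiased estimator of the variance of `Y`. -/
theorem stmt7 {Ω : Type*} [MeasurableSpace Ω] (μ : Measure Ω) [IsProbabilityMeasure μ]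
    (Y : Ω → ℝ) (hY : MemLp Y 2 μ)
    (a b c X : ℝ) (hc : c ≠ -1)
    (hmean : ∫ ω, Y ω ∂μ = X)
    (hvar : variance Y μ = a + b * X + c * X ^ 2) :
    ∫ ω, (a + b * Y ω + c * (Y ω) ^ 2) / (1 + c) ∂μ = variance Y μ := by
  have h1 : Integrable Y μ := hY.integrable one_le_two
  have h2 : Integrable (fun ω => Y ω ^ 2) μ := hY.integrable_sq
  have hsq : ∫ ω, Y ω ^ 2 ∂μ = variance Y μ + X ^ 2 := by
    rw [variance_eq_sub hY, hmean]
    simp only [Pi.pow_apply]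
    ring
  have hc1 : 1 + c ≠ 0 := fun h => hc (by linarith)
  have key : ∫ ω, (a + b * Y ω + c * (Y ω) ^ 2) ∂μ
      = a + b * X + c * (variance Y μ + X ^ 2) := by
    have e1 : ∫ ω, (a + b * Y ω + c * (Y ω) ^ 2) ∂μ
        = ∫ ω, ((fun ω => a + b * Y ω) ω + (fun ω => c * Y ω ^ 2) ω) ∂μ := rfl
    rw [e1, integral_add (show Integrable (fun ω => a + b * Y ω) μ by exact (integrable_const a).add (h1.const_mul b)) (h2.const_mul c)]
    have e2 : ∫ ω, (fun ω => a + b * Y ω) ω ∂μ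
        = ∫ ω, ((fun _ => a) ω + (fun ω => b * Y ω) ω) ∂μ := rfl
    rw [e2, integral_add (integrable_const a) (h1.const_mul b), integral_const,
      integral_const_mul, integral_const_mul, hmean, hsq]
    simp [measure_univ]
  simp_rw [div_eq_mul_inv]
  rw [integral_mul_const, key]
  field_simp
  linarith [hvar]
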